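/- Let V be a variety with 0⃗ and 1⃗ having Boolean factor congruences (BFC). Then V has left existentially definable factor congruences (LexDFC) if and only if for every A ∈ V and every central element e⃗ ∈ Z(A), the factor congruence θ_{0,e} equals the principal congruence θ^A(0⃗,e⃗) generated by the pairs (0ᵢ,eᵢ), 1 ≤ i ≤ n. -/

import Mathlib

open FirstOrder FirstOrder.Language FirstOrder.Language.Structure

universe u v w

namespace Paper

variable {L : FirstOrder.Language.{0, 0}}

/-- A congruence on an `L`-algebra: an equivalence relation compatible with all operations. -/
structure AlgCon (L : FirstOrder.Language.{0, 0}) (A : Type u) [L.Structure A] where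
  r : A → A → Prop
  refl : ∀ a, r a a
  symm : ∀ {a b}, r a b → r b a
  trans : ∀ {a b c}, r a b → r b c → r a c
  compat : ∀ {m : ℕ} (f : L.Functions m) (x y : Fin m → A),
    (∀ i, r (x i) (y i)) → r (funMap f x) (funMap f y)

namespace AlgCon

variable {A : Type u} [L.Structure A]

theorem ext' {c d : AlgCon L A} (h : ∀ a b, c.r a b ↔ d.r a b) : c = d := by
  cases c; cases d
  simp only [AlgCon.mk.injEq]
  funext a b
  exact propext (h a b)

/-- The identity (diagonal) congruence Δ. -/
def delta (L : FirstOrder.Language.{0, 0}) (A : Type u) [L.Structure A] : AlgCon L A where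
  r := Eq
  refl := fun _ => rfl
  symm := fun h => h.symm
  trans := fun h1 h2 => h1.trans h2
  compat := fun f x y h => by rw [funext h]

/-- The universal congruence ∇. -/
def nabla (L : FirstOrder.Language.{0, 0}) (A : Type u) [L.Structure A] : AlgCon L A where
  r := fun _ _ => True
  refl := fun _ => trivial
  symm := fun _ => trivial
  trans := fun _ _ => trivial
  compat := fun _ _ _ _ => trivial

/-- Meet (intersection) of congruences. -/
def inf (c d : AlgCon L A) : AlgCon L A where
  r := fun a b => c.r a b ∧ d.r a b
  refl := fun a => ⟨c.refl a, d.refl a⟩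
  symm := fun h => ⟨c.symm h.1, d.symm h.2⟩
  trans := fun h1 h2 => ⟨c.trans h1.1 h2.1, d.trans h1.2 h2.2⟩
  compat := fun f x y h =>
    ⟨c.compat f x y fun i => (h i).1, d.compat f x y fun i => (h i).2⟩

/-- Relational composition of congruences (as a binary relation). -/
def comp (c d : AlgCon L A) (a b : A) : Prop := ∃ z, c.r a z ∧ d.r z b

/-- The congruence generated by a binary relation. -/
def conGen (L : FirstOrder.Language.{0, 0}) {A : Type u} [L.Structure A]
    (R : A → A → Prop) : AlgCon L A where
  r := fun a b => ∀ c : AlgCon L A, (∀ x y, R x y → c.r x y) → c.r a b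
  refl := fun a _ _ => AlgCon.refl _ a
  symm := fun h c hc => c.symm (h c hc)
  trans := fun h1 h2 c hc => c.trans (h1 c hc) (h2 c hc)
  compat := fun f x y h c hc => c.compat f x y fun i => h i c hc

/-- Join of congruences in the congruence lattice. -/
def sup (c d : AlgCon L A) : AlgCon L A :=
  conGen L (fun a b => c.r a b ∨ d.r a b)

end AlgCon

/-- The principal congruence θ(a⃗, b⃗) generated by the pairs (aᵢ, bᵢ). -/
def thetaPairs {A : Type u} [L.Structure A] {n : ℕ} (a b : Fin n → A) : AlgCon L A :=
  AlgCon.conGen L (fun x y => ∃ i, x = a i ∧ y = b i)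

/-- The congruence θ(S) generated by S × S. -/
def thetaSet {A : Type u} [L.Structure A] (S : Set A) : AlgCon L A :=
  AlgCon.conGen L (fun x y => x ∈ S ∧ y ∈ S)

/-- `[a⃗, b⃗] ∈ θ`: all pairs (aᵢ, bᵢ) belong to the congruence θ. -/
def inCon {A : Type u} [L.Structure A] {n : ℕ} (θ : AlgCon L A) (a b : Fin n → A) : Prop :=
  ∀ i, θ.r (a i) (b i)

/-- θ and δ are complementary factor congruences: θ ∩ δ = Δ and θ ∘ δ = ∇. -/
def IsComplFC {A : Type u} [L.Structure A] (θ δ : AlgCon L A) : Prop :=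
  θ.inf δ = AlgCon.delta L A ∧ ∀ a b : A, θ.comp δ a b

/-- The set of factor congruences of `A`. -/
def FC (L : FirstOrder.Language.{0, 0}) (A : Type u) [L.Structure A] : Set (AlgCon L A) :=
  {θ | ∃ δ, IsComplFC θ δ}

/-- `S` is a Boolean sublattice of the congruence lattice of `A`: it contains Δ and ∇,
is closed under meet and join, is distributive, and every element has a complement in `S`. -/
def IsBooleanSublattice {A : Type u} [L.Structure A] (S : Set (AlgCon L A)) : Prop :=
  AlgCon.delta L A ∈ S ∧ AlgCon.nabla L A ∈ S ∧
  (∀ θ ∈ S, ∀ δ ∈ S, θ.inf δ ∈ S) ∧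
  (∀ θ ∈ S, ∀ δ ∈ S, θ.sup δ ∈ S) ∧
  (∀ θ ∈ S, ∀ δ ∈ S, ∀ γ ∈ S, θ.inf (δ.sup γ) = (θ.inf δ).sup (θ.inf γ)) ∧
  (∀ θ ∈ S, ∃ δ ∈ S, θ.inf δ = AlgCon.delta L A ∧ θ.sup δ = AlgCon.nabla L A)

/-- An identity (equation between two terms in finitely many variables). -/
structure Identity (L : FirstOrder.Language.{0, 0}) where
  nvars : ℕ
  lhs : L.Term (Fin nvars)
  rhs : L.Term (Fin nvars)

/-- An identity holds in an algebra. -/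
def Identity.Holds (e : Identity L) (A : Type u) [L.Structure A] : Prop :=
  ∀ v : Fin e.nvars → A, e.lhs.realize v = e.rhs.realize v

/-- Membership of an algebra in the variety axiomatized by the set of identities `E`. -/
def InVariety (E : Set (Identity L)) (A : Type u) [L.Structure A] : Prop :=
  ∀ e ∈ E, e.Holds A

/-- The data of the closed terms 0₁, …, 0ₙ and 1₁, …, 1ₙ. -/
structure ZeroOneData (L : FirstOrder.Language.{0, 0}) where
  n : ℕ
  npos : 0 < n
  zero : Fin n → L.Term Empty
  one : Fin n → L.Term Empty

/-- The interpretation of the tuple 0⃗ in an algebra. -/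
def ZeroOneData.zeroA (Z : ZeroOneData L) (A : Type u) [L.Structure A] : Fin Z.n → A :=
  fun i => (Z.zero i).realize Empty.elim

/-- The interpretation of the tuple 1⃗ in an algebra. -/
def ZeroOneData.oneA (Z : ZeroOneData L) (A : Type u) [L.Structure A] : Fin Z.n → A :=
  fun i => (Z.one i).realize Empty.elim

/-- `V ⊨ (0⃗ ≈ 1⃗) → x ≈ y`: `V` is a variety with 0⃗ and 1⃗. -/
def ZeroOneData.Separates (Z : ZeroOneData L) (E : Set (Identity L)) : Prop :=
  ∀ (A : Type u) [L.Structure A], InVariety E A →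
    (∀ i, Z.zeroA A i = Z.oneA A i) → Subsingleton A

/-- Product structure on `A × B`. -/
instance prodStructure (A : Type u) (B : Type u) [L.Structure A] [L.Structure B] :
    L.Structure (A × B) where
  funMap := fun f x => (funMap f (fun i => (x i).1), funMap f (fun i => (x i).2))
  RelMap := fun r x => RelMap r (fun i => (x i).1) ∧ RelMap r (fun i => (x i).2)

/-- A witness that `e⃗` is a central element of `A`: an isomorphism
`τ : A ≅ A₁ × A₂` with `A₁, A₂ ∈ V` and `τ(e⃗) = [0⃗, 1⃗]`. -/
structure CentralWitness (E : Set (Identity L)) (Z : ZeroOneData L)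
    (A : Type u) [L.Structure A] (e : Fin Z.n → A) : Type (u + 1) where
  A₁ : Type u
  A₂ : Type u
  [s₁ : L.Structure A₁]
  [s₂ : L.Structure A₂]
  mem₁ : InVariety E A₁
  mem₂ : InVariety E A₂
  iso : A ≃[L] (A₁ × A₂)
  he : ∀ i, iso (e i) = (Z.zeroA A₁ i, Z.oneA A₂ i)

/-- A witness that `e⃗` and `f⃗` are complementary central elements of `A`. -/
structure ComplCentralWitness (E : Set (Identity L)) (Z : ZeroOneData L)
    (A : Type u) [L.Structure A] (e f : Fin Z.n → A) extends
    CentralWitness E Z A e : Type (u + 1) where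
  hf : ∀ i, iso (f i) = (Z.oneA A₁ i, Z.zeroA A₂ i)

/-- `e⃗` is a central element of `A`. -/
def IsCentral (E : Set (Identity L)) (Z : ZeroOneData L)
    (A : Type u) [L.Structure A] (e : Fin Z.n → A) : Prop :=
  Nonempty (CentralWitness E Z A e)

/-- `e⃗ ⋄_A f⃗`: `e⃗` and `f⃗` are complementary central elements of `A`. -/
def CentDiamond (E : Set (Identity L)) (Z : ZeroOneData L)
    (A : Type u) [L.Structure A] (e f : Fin Z.n → A) : Prop :=
  Nonempty (ComplCentralWitness E Z A e f)

/-- `V` has Boolean factor congruences: for every `A ∈ V`, `FC(A)` is a Boolean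
sublattice of `Con(A)`. -/
def HasBFC (E : Set (Identity L)) : Prop :=
  ∀ (A : Type u) [L.Structure A], InVariety E A → IsBooleanSublattice (FC L A)

/-- `V` is stable by complements: every homomorphism between members of `V`
preserves complementary central elements. -/
def StableByComplements (E : Set (Identity L)) (Z : ZeroOneData L) : Prop :=
  ∀ (A B : Type u) [L.Structure A] [L.Structure B], InVariety E A → InVariety E B →
    ∀ (f : A →[L] B) (e g : Fin Z.n → A), CentDiamond E Z A e g →
      CentDiamond E Z B (fun i => f (e i)) (fun i => f (g i))

/-- A formula is existential: of the form ∃w⃗ ψ with ψ quantifier-free. -/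
def IsExistentialForm {α : Type*} (φ : L.Formula α) : Prop :=
  ∃ (m : ℕ) (ψ : L.BoundedFormula α m), ψ.IsQF ∧ φ = ψ.exs

/-- The formula λ(z⃗, x, y) satisfies the condition (R): for all `A, B ∈ V`,
`A × B ⊨ λ([0⃗,1⃗], (a,c), (b,d))` iff `c = d`. -/
def RightFormulaWorks (E : Set (Identity L)) (Z : ZeroOneData L)
    (φ : L.Formula ((Fin Z.n) ⊕ (Fin 2))) : Prop :=
  ∀ (A B : Type u) [L.Structure A] [L.Structure B], InVariety E A → InVariety E B →
    ∀ (a b : A) (c d : B),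
      (φ.Realize (M := A × B)
        (Sum.elim (fun i => (Z.zeroA A i, Z.oneA B i)) ![(a, c), (b, d)]) ↔ c = d)

/-- The formula ρ(z⃗, x, y) satisfies the condition (L): for all `A, B ∈ V`,
`A × B ⊨ ρ([0⃗,1⃗], (a,c), (b,d))` iff `a = b`. -/
def LeftFormulaWorks (E : Set (Identity L)) (Z : ZeroOneData L)
    (φ : L.Formula ((Fin Z.n) ⊕ (Fin 2))) : Prop :=
  ∀ (A B : Type u) [L.Structure A] [L.Structure B], InVariety E A → InVariety E B →
    ∀ (a b : A) (c d : B),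
      (φ.Realize (M := A × B)
        (Sum.elim (fun i => (Z.zeroA A i, Z.oneA B i)) ![(a, c), (b, d)]) ↔ a = b)

/-- `V` has right existentially definable factor congruences. -/
def HasRexDFC (E : Set (Identity L)) (Z : ZeroOneData L) : Prop :=
  HasBFC.{u} E ∧ ∃ φ : L.Formula ((Fin Z.n) ⊕ (Fin 2)),
    IsExistentialForm φ ∧ RightFormulaWorks.{u} E Z φ

/-- `V` has left existentially definable factor congruences. -/
def HasLexDFC (E : Set (Identity L)) (Z : ZeroOneData L) : Prop :=
  HasBFC.{u} E ∧ ∃ φ : L.Formula ((Fin Z.n) ⊕ (Fin 2)),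
    IsExistentialForm φ ∧ LeftFormulaWorks.{u} E Z φ

/-- `(θ, δ)` is the pair of complementary factor congruences associated with the
central element `e⃗`, i.e. `θ ⋄ δ`, `[e⃗,0⃗] ∈ θ` and `[e⃗,1⃗] ∈ δ`. -/
def PairFor (Z : ZeroOneData L) (A : Type u) [L.Structure A]
    (e : Fin Z.n → A) (θ δ : AlgCon L A) : Prop :=
  IsComplFC θ δ ∧ inCon θ e (Z.zeroA A) ∧ inCon δ e (Z.oneA A)

/-- `a⃗ = e⃗ ∧ f⃗` in the center: `[a⃗,0⃗] ∈ θ_{0,e} ∩ θ_{0,f}` and `[a⃗,1⃗] ∈ θ_{1,e} ∨ θ_{1,f}`. -/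
def IsMeetOf (Z : ZeroOneData L) (A : Type u) [L.Structure A]
    (e f a : Fin Z.n → A) : Prop :=
  ∃ θ₀e θ₁e θ₀f θ₁f : AlgCon L A, PairFor Z A e θ₀e θ₁e ∧ PairFor Z A f θ₀f θ₁f ∧
    inCon (θ₀e.inf θ₀f) a (Z.zeroA A) ∧ inCon (θ₁e.sup θ₁f) a (Z.oneA A)

/-- `a⃗ = e⃗ ∨ f⃗` in the center: `[a⃗,0⃗] ∈ θ_{0,e} ∨ θ_{0,f}` and `[a⃗,1⃗] ∈ θ_{1,e} ∩ θ_{1,f}`. -/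
def IsJoinOf (Z : ZeroOneData L) (A : Type u) [L.Structure A]
    (e f a : Fin Z.n → A) : Prop :=
  ∃ θ₀e θ₁e θ₀f θ₁f : AlgCon L A, PairFor Z A e θ₀e θ₁e ∧ PairFor Z A f θ₀f θ₁f ∧
    inCon (θ₀e.sup θ₀f) a (Z.zeroA A) ∧ inCon (θ₁e.inf θ₁f) a (Z.oneA A)

/-- `a⃗ = e⃗^c` in the center: `[a⃗,1⃗] ∈ θ_{0,e}` and `[a⃗,0⃗] ∈ θ_{1,e}`. -/
def IsComplOf (Z : ZeroOneData L) (A : Type u) [L.Structure A]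
    (e a : Fin Z.n → A) : Prop :=
  ∃ θ₀e θ₁e : AlgCon L A, PairFor Z A e θ₀e θ₁e ∧
    inCon θ₀e a (Z.oneA A) ∧ inCon θ₁e a (Z.zeroA A)

section Quotient

variable {A : Type u} [L.Structure A]

/-- The setoid underlying a congruence. -/
def AlgCon.setoid (c : AlgCon L A) : Setoid A :=
  ⟨c.r, ⟨c.refl, fun h => c.symm h, fun h1 h2 => c.trans h1 h2⟩⟩

/-- The quotient algebra `A/θ`. -/
def ConQuot (c : AlgCon L A) : Type u := Quotient c.setoid

/-- The class of `a` in `A/θ`. -/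
def ConQuot.mk (c : AlgCon L A) (a : A) : ConQuot c := Quotient.mk c.setoid a

noncomputable instance conQuotStructure (c : AlgCon L A) : L.Structure (ConQuot c) where
  funMap := fun f x => ConQuot.mk c (funMap f (fun i => (Quotient.out (α := A) (s := c.setoid) (x i))))
  RelMap := fun r x => ∃ as : Fin _ → A, (∀ i, ConQuot.mk c (as i) = x i) ∧ RelMap r as

theorem conQuot_funMap_mk (c : AlgCon L A) {m : ℕ} (f : L.Functions m) (as : Fin m → A) :
    funMap f (fun i => ConQuot.mk c (as i)) = ConQuot.mk c (funMap f as) := by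
  show ConQuot.mk c _ = ConQuot.mk c _
  apply Quotient.sound
  apply c.compat
  intro i
  exact Quotient.mk_out (s := c.setoid) (as i)

/-- The canonical quotient homomorphism `A → A/θ`. -/
def conQuotMk (c : AlgCon L A) : A →[L] ConQuot c where
  toFun := ConQuot.mk c
  map_fun' := fun f x => (conQuot_funMap_mk c f x).symm
  map_rel' := fun _r x h => ⟨x, fun _ => rfl, h⟩

end Quotient


/-! ### Auxiliary development for Statement 19 -/

section Aux19Basic

variable {A B C D : Type v} [L.Structure A] [L.Structure B] [L.Structure C] [L.Structure D]

theorem AlgCon.termCompat (c : AlgCon L A) {β : Type*} (t : L.Term β) (p q : β → A)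
    (h : ∀ i, c.r (p i) (q i)) : c.r (t.realize p) (t.realize q) := by
  induction t with
  | var i => exact h i
  | func f ts ih => exact c.compat f _ _ fun i => ih i

theorem AlgCon.conGen_min {R : A → A → Prop} {c : AlgCon L A}
    (h : ∀ x y, R x y → c.r x y) {a b : A} (hg : (AlgCon.conGen L R).r a b) : c.r a b :=
  hg c h

theorem AlgCon.conGen_of {R : A → A → Prop} {a b : A} (h : R a b) :
    (AlgCon.conGen L R).r a b := fun c hc => hc a b h

theorem AlgCon.sup_of_left {c d : AlgCon L A} {a b : A} (h : c.r a b) : (c.sup d).r a b :=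
  fun e he => he a b (Or.inl h)

theorem AlgCon.sup_of_right {c d : AlgCon L A} {a b : A} (h : d.r a b) : (c.sup d).r a b :=
  fun e he => he a b (Or.inr h)

theorem AlgCon.sup_delta (c : AlgCon L A) : c.sup (AlgCon.delta L A) = c := by
  apply AlgCon.ext'
  intro a b
  constructor
  · intro h
    exact h c (fun x y hxy => hxy.elim id (fun he => he ▸ c.refl x))
  · exact AlgCon.sup_of_left

theorem AlgCon.inf_nabla (c : AlgCon L A) : c.inf (AlgCon.nabla L A) = c :=
  AlgCon.ext' fun a b => ⟨And.left, fun h => ⟨h, trivial⟩⟩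

/-- Pull back a congruence along a homomorphism. -/
def AlgCon.pull (g : A →[L] B) (c : AlgCon L B) : AlgCon L A where
  r a b := c.r (g a) (g b)
  refl a := c.refl _
  symm h := c.symm h
  trans h1 h2 := c.trans h1 h2
  compat f x y h := by
    show c.r (g (funMap f x)) (g (funMap f y))
    rw [HomClass.map_fun, HomClass.map_fun]
    exact c.compat f _ _ h

theorem hom_realize_closed (g : A →[L] B) (t : L.Term Empty) :
    g (t.realize Empty.elim) = t.realize Empty.elim := by
  have h : (Empty.elim : Empty → B) = g ∘ (Empty.elim : Empty → A) :=
    funext fun x => x.elim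
  conv_rhs => rw [h, HomClass.realize_term]

theorem zeroA_hom (Z : ZeroOneData L) (g : A →[L] B) (i : Fin Z.n) :
    g (Z.zeroA A i) = Z.zeroA B i := hom_realize_closed g _

theorem oneA_hom (Z : ZeroOneData L) (g : A →[L] B) (i : Fin Z.n) :
    g (Z.oneA A i) = Z.oneA B i := hom_realize_closed g _

/-! #### Products -/

theorem prod_funMap {m : ℕ} (f : L.Functions m) (x : Fin m → A × B) :
    funMap f x = (funMap f (fun i => (x i).1), funMap f (fun i => (x i).2)) := rfl

theorem prod_realize {β : Type*} (t : L.Term β) (v : β → A × B) :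
    t.realize v = (t.realize (fun i => (v i).1), t.realize (fun i => (v i).2)) := by
  induction t with
  | var i => rfl
  | func f ts ih =>
    show funMap f (fun i => (ts i).realize v) = _
    rw [prod_funMap]
    simp only [Term.realize]
    refine Prod.ext_iff.2 ⟨?_, ?_⟩
    · show funMap f (fun i => ((ts i).realize v).1) = funMap f (fun i => (ts i).realize (fun j => (v j).1))
      exact congrArg _ (funext fun i => congrArg Prod.fst (ih i))
    · show funMap f (fun i => ((ts i).realize v).2) = funMap f (fun i => (ts i).realize (fun j => (v j).2))
      exact congrArg _ (funext fun i => congrArg Prod.snd (ih i))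

theorem closed_realize_prod (t : L.Term Empty) :
    (t.realize Empty.elim : A × B) =
      (t.realize Empty.elim, t.realize Empty.elim) := by
  rw [prod_realize]
  refine Prod.ext_iff.2 ⟨?_, ?_⟩
  · exact congrArg (fun v => Term.realize v t) (funext fun x => x.elim)
  · exact congrArg (fun v => Term.realize v t) (funext fun x => x.elim)

theorem zeroA_prod (Z : ZeroOneData L) (i : Fin Z.n) :
    Z.zeroA (A × B) i = (Z.zeroA A i, Z.zeroA B i) := closed_realize_prod _

theorem oneA_prod (Z : ZeroOneData L) (i : Fin Z.n) :
    Z.oneA (A × B) i = (Z.oneA A i, Z.oneA B i) := closed_realize_prod _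

theorem InVariety.prod {E : Set (Identity L)} (hA : InVariety E A) (hB : InVariety E B) :
    InVariety E (A × B) := by
  intro e he v
  rw [prod_realize, prod_realize, hA e he, hB e he]

variable [L.IsAlgebraic]

/-- Pairing of homomorphisms into a product. -/
def pairHom (f : C →[L] A) (g : C →[L] B) : C →[L] (A × B) where
  toFun := fun c => (f c, g c)
  map_fun' := fun ff x => by
    show (f (funMap ff x), g (funMap ff x)) = funMap ff (fun i => (f (x i), g (x i)))
    rw [prod_funMap]
    refine Prod.ext_iff.2 ⟨?_, ?_⟩
    · exact (HomClass.map_fun f ff x).trans rfl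
    · exact (HomClass.map_fun g ff x).trans rfl
  map_rel' := fun r _ _ => isEmptyElim r

@[simp] theorem pairHom_apply (f : C →[L] A) (g : C →[L] B) (c : C) :
    pairHom f g c = (f c, g c) := rfl

/-- First projection as homomorphism. -/
def fstHom : (A × B) →[L] A where
  toFun := Prod.fst
  map_fun' := fun f x => rfl
  map_rel' := fun r _ _ => isEmptyElim r

/-- Second projection as homomorphism. -/
def sndHom : (A × B) →[L] B where
  toFun := Prod.snd
  map_fun' := fun f x => rfl
  map_rel' := fun r _ _ => isEmptyElim r

/-- Product of homomorphisms. -/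
def prodMapHom (f : A →[L] C) (g : B →[L] D) : (A × B) →[L] (C × D) :=
  pairHom (f.comp fstHom) (g.comp sndHom)

@[simp] theorem prodMapHom_apply (f : A →[L] C) (g : B →[L] D) (x : A × B) :
    prodMapHom f g x = (f x.1, g x.2) := rfl

/-- Kernel of the first projection as congruence. -/
def fstCon (A B : Type v) [L.Structure A] [L.Structure B] : AlgCon L (A × B) where
  r x y := x.1 = y.1
  refl _ := rfl
  symm h := h.symm
  trans h1 h2 := h1.trans h2
  compat f x y h := by
    show (funMap f x).1 = (funMap f y).1
    rw [prod_funMap, prod_funMap]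
    show funMap f (fun i => (x i).1) = funMap f (fun i => (y i).1)
    exact congrArg _ (funext h)

/-- Kernel of the second projection as congruence. -/
def sndCon (A B : Type v) [L.Structure A] [L.Structure B] : AlgCon L (A × B) where
  r x y := x.2 = y.2
  refl _ := rfl
  symm h := h.symm
  trans h1 h2 := h1.trans h2
  compat f x y h := by
    show (funMap f x).2 = (funMap f y).2
    rw [prod_funMap, prod_funMap]
    show funMap f (fun i => (x i).2) = funMap f (fun i => (y i).2)
    exact congrArg _ (funext h)

theorem isComplFC_fst_snd (A B : Type v) [L.Structure A] [L.Structure B] :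
    IsComplFC (fstCon (L := L) A B) (sndCon (L := L) A B) := by
  constructor
  · apply AlgCon.ext'
    intro a b
    show a.1 = b.1 ∧ a.2 = b.2 ↔ a = b
    exact Prod.ext_iff.symm
  · intro a b
    exact ⟨(a.1, b.2), rfl, rfl⟩

/-- The canonical central element of a product. -/
def hatE (Z : ZeroOneData L) (A B : Type v) [L.Structure A] [L.Structure B] :
    Fin Z.n → A × B := fun i => (Z.zeroA A i, Z.oneA B i)

theorem pairFor_hat (Z : ZeroOneData L) (A B : Type v) [L.Structure A] [L.Structure B] :
    PairFor Z (A × B) (hatE Z A B) (fstCon (L := L) A B) (sndCon (L := L) A B) := by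
  refine ⟨isComplFC_fst_snd A B, fun i => ?_, fun i => ?_⟩
  · show (hatE Z A B i).1 = (Z.zeroA (A × B) i).1
    rw [zeroA_prod]
    rfl
  · show (hatE Z A B i).2 = (Z.oneA (A × B) i).2
    rw [oneA_prod]
    rfl

theorem isCentral_hat {E : Set (Identity L)} (Z : ZeroOneData L)
    (hA : InVariety E A) (hB : InVariety E B) : IsCentral E Z (A × B) (hatE Z A B) :=
  ⟨{ A₁ := A
     A₂ := B
     mem₁ := hA
     mem₂ := hB
     iso := Language.Equiv.refl L (A × B)
     he := fun i => rfl }⟩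

/-! #### Quotients -/

theorem ConQuot.mk_eq_iff (c : AlgCon L A) {a b : A} :
    ConQuot.mk c a = ConQuot.mk c b ↔ c.r a b :=
  ⟨fun h => Quotient.exact h, fun h => Quotient.sound h⟩

theorem InVariety.quot {E : Set (Identity L)} (hA : InVariety E A) (c : AlgCon L A) :
    InVariety E (ConQuot c) := by
  intro e he v
  have hv : v = (conQuotMk c) ∘ (fun i => Quotient.out (s := c.setoid) (v i)) :=
    funext fun i => (Quotient.out_eq _).symm
  rw [hv, HomClass.realize_term, HomClass.realize_term, hA e he]

theorem zeroA_quot (Z : ZeroOneData L) (c : AlgCon L A) (i : Fin Z.n) :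
    Z.zeroA (ConQuot c) i = ConQuot.mk c (Z.zeroA A i) :=
  (zeroA_hom Z (conQuotMk c) i).symm

theorem oneA_quot (Z : ZeroOneData L) (c : AlgCon L A) (i : Fin Z.n) :
    Z.oneA (ConQuot c) i = ConQuot.mk c (Z.oneA A i) :=
  (oneA_hom Z (conQuotMk c) i).symm

theorem eq_nabla_of_subsingleton (c : AlgCon L A) (h : Subsingleton (ConQuot c)) :
    c = AlgCon.nabla L A :=
  AlgCon.ext' fun a b =>
    ⟨fun _ => trivial, fun _ => (ConQuot.mk_eq_iff c).1 (h.elim _ _)⟩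

end Aux19Basic

section Aux19Unique

variable {E : Set (Identity L)} {Z : ZeroOneData L} [L.IsAlgebraic]
variable {A : Type u} [L.Structure A]

theorem sup_eq_nabla_of (hsep : ZeroOneData.Separates.{u} Z E)
    (hA : InVariety E A) {e : Fin Z.n → A} {c₁ c₂ : AlgCon L A}
    (h1 : inCon c₁ e (Z.zeroA A)) (h2 : inCon c₂ e (Z.oneA A)) :
    c₁.sup c₂ = AlgCon.nabla L A := by
  set s := c₁.sup c₂ with hs
  have hQ : InVariety E (ConQuot s) := hA.quot s
  apply eq_nabla_of_subsingleton
  apply hsep _ hQ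
  intro i
  rw [zeroA_quot, oneA_quot]
  have e0 : ConQuot.mk s (Z.zeroA A i) = ConQuot.mk s (e i) :=
    (ConQuot.mk_eq_iff s).2 (AlgCon.sup_of_left (c₁.symm (h1 i)))
  have e1 : ConQuot.mk s (e i) = ConQuot.mk s (Z.oneA A i) :=
    (ConQuot.mk_eq_iff s).2 (AlgCon.sup_of_right (h2 i))
  rw [e0, e1]

theorem isComplFC_symm {c d : AlgCon L A} (h : IsComplFC c d) : IsComplFC d c := by
  refine ⟨?_, fun a b => ?_⟩
  · rw [← h.1]
    exact AlgCon.ext' fun a b => and_comm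
  · obtain ⟨z, hz1, hz2⟩ := h.2 b a
    exact ⟨z, d.symm hz2, c.symm hz1⟩

theorem pairFor_unique (hsep : ZeroOneData.Separates.{u} Z E)
    (hbfc : HasBFC.{u} E) (hA : InVariety E A) {e : Fin Z.n → A}
    {θ δ θ' δ' : AlgCon L A} (h : PairFor Z A e θ δ) (h' : PairFor Z A e θ' δ') :
    θ = θ' := by
  obtain ⟨-, -, -, -, hdist, -⟩ := hbfc A hA
  have hFC : ∀ {c d : AlgCon L A}, IsComplFC c d → c ∈ FC L A := fun hcd => ⟨_, hcd⟩
  have key : ∀ {θ₁ δ₁ θ₂ δ₂ : AlgCon L A}, PairFor Z A e θ₁ δ₁ → PairFor Z A e θ₂ δ₂ →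
      ∀ a b, θ₁.r a b → (θ₁.inf θ₂).r a b := by
    intro θ₁ δ₁ θ₂ δ₂ p1 p2 a b hab
    have hnab : θ₂.sup δ₁ = AlgCon.nabla L A :=
      sup_eq_nabla_of hsep hA p2.2.1 p1.2.2
    have hd : θ₁.inf (θ₂.sup δ₁) = (θ₁.inf θ₂).sup (θ₁.inf δ₁) :=
      hdist θ₁ (hFC p1.1) θ₂ (hFC p2.1) δ₁ (hFC (isComplFC_symm p1.1))
    rw [hnab, AlgCon.inf_nabla, p1.1.1, AlgCon.sup_delta] at hd
    rw [hd] at hab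
    exact hab
  apply AlgCon.ext'
  intro a b
  constructor
  · intro hab
    exact ((key h h' a b hab)).2
  · intro hab
    exact ((key h' h a b hab)).2

end Aux19Unique

section Aux19Free

variable [L.IsAlgebraic]

noncomputable instance termStructure [L.IsAlgebraic] (α : Type u) : L.Structure (L.Term α) where
  funMap := fun f ts => Term.func f ts
  RelMap := fun r _ => isEmptyElim r

theorem termA_realize {α : Type u} {β : Type*} (t : L.Term β) (v : β → L.Term α) :
    (Term.realize (M := L.Term α) v t) = t.subst v := by
  induction t with
  | var i => rfl
  | func f ts ih =>
    show Term.func f (fun i => Term.realize v (ts i)) = _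
    rw [Term.subst]
    exact congrArg _ (funext ih)

/-- Instances of the identities of `E` on the term algebra. -/
def eRel (E : Set (Identity L)) (α : Type u) : L.Term α → L.Term α → Prop :=
  fun x y => ∃ e ∈ E, ∃ σ : Fin (Identity.nvars e) → L.Term α,
    x = e.lhs.subst σ ∧ y = e.rhs.subst σ

/-- The free algebra of the variety over a set of variables. -/
abbrev FreeAlg (E : Set (Identity L)) (α : Type u) : Type u :=
  ConQuot (AlgCon.conGen L (eRel E α))

/-- Class of a term in the free algebra. -/
noncomputable def freeMk (E : Set (Identity L)) {α : Type u} (t : L.Term α) : FreeAlg E α :=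
  ConQuot.mk _ t

/-- Generators of the free algebra. -/
noncomputable def freeGen (E : Set (Identity L)) {α : Type u} (x : α) : FreeAlg E α :=
  freeMk E (Term.var x)

theorem freeAlg_inVariety (E : Set (Identity L)) (α : Type u) :
    InVariety E (FreeAlg E α) := by
  intro e he v
  set c := AlgCon.conGen L (eRel E α) with hc
  have hv : v = (conQuotMk c) ∘ (fun i => Quotient.out (s := c.setoid) (v i)) :=
    funext fun i => (Quotient.out_eq _).symm
  rw [hv, HomClass.realize_term, HomClass.realize_term]
  rw [termA_realize, termA_realize]
  exact (ConQuot.mk_eq_iff c).2 (AlgCon.conGen_of ⟨e, he, _, rfl, rfl⟩)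

section UnivHom

variable {E : Set (Identity L)} {α : Type u} {A : Type u} [L.Structure A]

/-- Kernel of the evaluation map on the term algebra. -/
def evalCon (v : α → A) : AlgCon L (L.Term α) where
  r s t := Term.realize v s = Term.realize v t
  refl _ := rfl
  symm h := h.symm
  trans h1 h2 := h1.trans h2
  compat f x y h := by
    show Term.realize v (Term.func f x) = Term.realize v (Term.func f y)
    show funMap f (fun i => Term.realize v (x i)) = funMap f (fun i => Term.realize v (y i))
    exact congrArg _ (funext h)

theorem conGen_le_evalCon (hA : InVariety E A) (v : α → A) {s t : L.Term α}
    (h : (AlgCon.conGen L (eRel E α)).r s t) : Term.realize v s = Term.realize v t := by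
  refine AlgCon.conGen_min (c := evalCon v) ?_ h
  rintro x y ⟨e, he, σ, rfl, rfl⟩
  show Term.realize v (Term.subst e.lhs σ) = Term.realize v (Term.subst e.rhs σ)
  rw [Term.realize_subst, Term.realize_subst]
  exact hA e he _

/-- The universal homomorphism from the free algebra. -/
noncomputable def freeHom (hA : InVariety E A) (v : α → A) : FreeAlg E α →[L] A where
  toFun := Quotient.lift (fun t : L.Term α => Term.realize v t)
    (fun s t hst => conGen_le_evalCon hA v hst)
  map_fun' := fun {k} f x => by
    set c := AlgCon.conGen L (eRel E α) with hc
    have hx : ∀ i, x i = ConQuot.mk c (Quotient.out (s := c.setoid) (x i)) :=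
      fun i => (Quotient.out_eq _).symm
    have h1 : funMap f x =
        ConQuot.mk c (funMap f (fun i => Quotient.out (s := c.setoid) (x i))) := rfl
    rw [h1]
    show funMap f (fun i => Term.realize v (Quotient.out (s := c.setoid) (x i))) = _
    conv_rhs => rw [funext hx]
    rfl
  map_rel' := fun r _ _ => isEmptyElim r

theorem freeHom_gen (hA : InVariety E A) (v : α → A) (x : α) :
    freeHom hA v (freeGen E x) = v x := rfl

theorem freeHom_mk (hA : InVariety E A) (v : α → A) (t : L.Term α) :
    freeHom hA v (freeMk E t) = Term.realize v t := rfl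

end UnivHom

end Aux19Free

section Aux19Malcev

variable {n : ℕ} {C D : Type v} [L.Structure C] [L.Structure D]

/-- A single canonical Mal'cev step datum. -/
def Step (L : FirstOrder.Language.{0, 0}) (n : ℕ) : Type :=
  Σ mm : ℕ, L.Term (Fin mm ⊕ (Fin n ⊕ Fin n))

/-- Left endpoint of a step. -/
def stepP (s : Step L n) (a b : Fin n → C) (w : Fin s.1 → C) : C :=
  s.2.realize (Sum.elim w (Sum.elim a b))

/-- Right endpoint of a step. -/
def stepQ (s : Step L n) (a b : Fin n → C) (w : Fin s.1 → C) : C :=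
  s.2.realize (Sum.elim w (Sum.elim b a))

/-- The one-step relation in the Mal'cev chain description of `θ(a,b)`. -/
def CanStep (a b : Fin n → C) (x y : C) : Prop :=
  ∃ (s : Step L n) (w : Fin s.1 → C), x = stepP s a b w ∧ y = stepQ s a b w

theorem canStep_symm {a b : Fin n → C} {x y : C} (h : CanStep (L := L) a b x y) :
    CanStep (L := L) a b y x := by
  obtain ⟨⟨mm, t⟩, w, hp, hq⟩ := h
  refine ⟨⟨mm, t.relabel (Sum.map id (Sum.elim Sum.inr Sum.inl))⟩, w, ?_, ?_⟩
  · rw [hq]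
    show stepQ (L := L) ⟨mm, t⟩ a b w = _
    unfold stepP stepQ
    rw [Term.realize_relabel]
    exact congrArg (fun v => Term.realize v t)
      (funext fun z => by rcases z with i | (s | s) <;> rfl)
  · rw [hp]
    show stepP (L := L) ⟨mm, t⟩ a b w = _
    unfold stepP stepQ
    rw [Term.realize_relabel]
    exact congrArg (fun v => Term.realize v t)
      (funext fun z => by rcases z with i | (s | s) <;> rfl)

theorem canStep_refl (a b : Fin n → C) (x : C) : CanStep (L := L) a b x x :=
  ⟨⟨1, Term.var (Sum.inl 0)⟩, fun _ => x, rfl, rfl⟩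

theorem canStep_gen (a b : Fin n → C) (i : Fin n) : CanStep (L := L) a b (a i) (b i) :=
  ⟨⟨0, Term.var (Sum.inr (Sum.inl i))⟩, Fin.elim0, rfl, rfl⟩

theorem canStep_sound {a b : Fin n → C} (c : AlgCon L C) (h : ∀ i, c.r (a i) (b i))
    {x y : C} (hs : CanStep (L := L) a b x y) : c.r x y := by
  obtain ⟨⟨mm, t⟩, w, rfl, rfl⟩ := hs
  refine c.termCompat t _ _ fun z => ?_
  rcases z with i | (s | s)
  · exact c.refl _
  · exact h s
  · exact c.symm (h s)

theorem canStep_update {a b : Fin n → C} {k : ℕ} (f : L.Functions k) (u : Fin k → C)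
    (i : Fin k) {x y : C} (h : CanStep (L := L) a b x y) :
    CanStep (L := L) a b (funMap f (Function.update u i x)) (funMap f (Function.update u i y)) := by
  classical
  obtain ⟨⟨mm, t⟩, w, rfl, rfl⟩ := h
  set t1 : L.Term ((Fin mm ⊕ Fin k) ⊕ (Fin n ⊕ Fin n)) :=
    Term.func f (fun s => if s = i then t.relabel (Sum.map Sum.inl id)
      else Term.var (Sum.inl (Sum.inr s))) with ht1
  refine ⟨⟨mm + k, t1.relabel (Sum.map (⇑finSumFinEquiv) id)⟩,
    (Sum.elim w u) ∘ ⇑finSumFinEquiv.symm, ?_, ?_⟩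
  all_goals {
    simp only [stepP, stepQ]
    rw [Term.realize_relabel]
    have hcomp : ∀ (aa bb : Fin n → C),
        (Sum.elim ((Sum.elim w u) ∘ ⇑finSumFinEquiv.symm) (Sum.elim aa bb)) ∘
          (Sum.map (⇑finSumFinEquiv) id) = Sum.elim (Sum.elim w u) (Sum.elim aa bb) := by
      intro aa bb
      funext z
      rcases z with z | z
      · show Sum.elim w u (finSumFinEquiv.symm (finSumFinEquiv z)) = _
        rw [Equiv.symm_apply_apply]
        rfl
      · rfl
    rw [hcomp]
    rw [ht1]
    rw [Term.realize_func]
    congr 1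
    funext s
    rw [Function.update_apply]
    by_cases hsi : s = i
    · rw [if_pos hsi, if_pos hsi, Term.realize_relabel]
      exact (congrArg (fun v => Term.realize v t)
        (funext fun z => by rcases z with z | z <;> rfl)).symm
    · rw [if_neg hsi, if_neg hsi]
      rfl }

/-- The chain congruence: reflexive-transitive closure of canonical steps. -/
def chainCon (a b : Fin n → C) : AlgCon L C where
  r := Relation.ReflTransGen (CanStep (L := L) a b)
  refl _ := Relation.ReflTransGen.refl
  symm h := (@Relation.ReflTransGen.stdSymm _ _ ⟨fun _ _ hs => canStep_symm hs⟩).symm _ _ h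
  trans h1 h2 := Relation.ReflTransGen.trans h1 h2
  compat := by
    classical
    intro k f x y h
    have key : ∀ s : Finset (Fin k), Relation.ReflTransGen (CanStep (L := L) a b)
        (funMap f x) (funMap f (fun i => if i ∈ s then y i else x i)) := by
      intro s
      induction s using Finset.induction_on with
      | empty => simpa using Relation.ReflTransGen.refl
      | @insert i s hi ih =>
        refine ih.trans ?_
        set mix := fun j => if j ∈ s then y j else x j with hmix
        have h2 : mix = Function.update mix i (x i) := by
          funext j
          rw [Function.update_apply]
          by_cases hji : j = i
          · subst hji
            rw [if_pos rfl, hmix]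
            simp [hi]
          · rw [if_neg hji]
        have h1 : (fun j => if j ∈ insert i s then y j else x j) =
            Function.update mix i (y i) := by
          funext j
          rw [Function.update_apply]
          by_cases hji : j = i
          · subst hji
            simp
          · simp [Function.update_apply, Finset.mem_insert, hji, hmix]
        rw [h1]
        conv_lhs => rw [h2]
        exact Relation.ReflTransGen.lift (fun z => funMap f (Function.update mix i z))
          (fun p q hpq => canStep_update f mix i hpq) _ _ (h i)
    have := key Finset.univ
    simpa using this

theorem thetaPairs_iff_chain (a b : Fin n → C) (x y : C) :
    (thetaPairs (L := L) a b).r x y ↔ Relation.ReflTransGen (CanStep (L := L) a b) x y := by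
  constructor
  · intro h
    refine AlgCon.conGen_min (c := chainCon a b) ?_ h
    rintro p q ⟨i, rfl, rfl⟩
    exact Relation.ReflTransGen.single (canStep_gen a b i)
  · intro h
    induction h with
    | refl => exact (thetaPairs (L := L) a b).refl x
    | tail _ hstep ih =>
      exact (thetaPairs (L := L) a b).trans ih
        (canStep_sound _ (fun i => AlgCon.conGen_of ⟨i, rfl, rfl⟩) hstep)

/-- Semantics of a scheme (a list of steps): there is a Mal'cev chain of that shape. -/
def HoldsFrom (a b : Fin n → C) : List (Step L n) → C → C → Prop
  | [] => fun x y => x = y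
  | s :: S' => fun x y => ∃ w : Fin s.1 → C,
      x = stepP s a b w ∧ HoldsFrom a b S' (stepQ s a b w) y

theorem holdsFrom_to_chain {a b : Fin n → C} {S : List (Step L n)} {x y : C}
    (h : HoldsFrom (L := L) a b S x y) :
    Relation.ReflTransGen (CanStep (L := L) a b) x y := by
  induction S generalizing x with
  | nil => exact h ▸ Relation.ReflTransGen.refl
  | cons s S' ih =>
    obtain ⟨w, rfl, htail⟩ := h
    exact Relation.ReflTransGen.head ⟨s, w, rfl, rfl⟩ (ih htail)

theorem chain_to_holdsFrom {a b : Fin n → C} {x y : C}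
    (h : Relation.ReflTransGen (CanStep (L := L) a b) x y) :
    ∃ S : List (Step L n), HoldsFrom (L := L) a b S x y := by
  induction h using Relation.ReflTransGen.head_induction_on with
  | refl => exact ⟨[], rfl⟩
  | head hstep _ ih =>
    obtain ⟨S, hS⟩ := ih
    obtain ⟨s, w, hp, hq⟩ := hstep
    exact ⟨s :: S, w, hp, hq ▸ hS⟩

theorem stepP_hom (h : C →[L] D) (s : Step L n) (a b : Fin n → C) (w : Fin s.1 → C) :
    h (stepP s a b w) = stepP s (⇑h ∘ a) (⇑h ∘ b) (⇑h ∘ w) := by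
  unfold stepP
  rw [← HomClass.realize_term]
  exact congrArg (fun v => Term.realize v s.2)
    (funext fun z => by rcases z with z | (z | z) <;> rfl)

theorem stepQ_hom (h : C →[L] D) (s : Step L n) (a b : Fin n → C) (w : Fin s.1 → C) :
    h (stepQ s a b w) = stepQ s (⇑h ∘ a) (⇑h ∘ b) (⇑h ∘ w) := by
  unfold stepQ
  rw [← HomClass.realize_term]
  exact congrArg (fun v => Term.realize v s.2)
    (funext fun z => by rcases z with z | (z | z) <;> rfl)

theorem holdsFrom_hom (h : C →[L] D) {a b : Fin n → C} {S : List (Step L n)} {x y : C}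
    (hh : HoldsFrom (L := L) a b S x y) :
    HoldsFrom (L := L) (⇑h ∘ a) (⇑h ∘ b) S (h x) (h y) := by
  induction S generalizing x with
  | nil => exact congrArg h hh
  | cons s S' ih =>
    obtain ⟨w, rfl, htail⟩ := hh
    exact ⟨⇑h ∘ w, stepP_hom h s a b w, stepQ_hom h s a b w ▸ ih htail⟩

end Aux19Malcev


section Aux19Formula

variable {n : ℕ}

/-- Flattened version of `HoldsFrom`, with total indexing functions. -/
def FlatHolds {C : Type v} [L.Structure C] (S : List (Step L n)) (a b : Fin n → C)
    (x y : C) : Prop :=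
  ∃ (cc : ℕ → C) (w : ℕ → ℕ → C),
    cc 0 = x ∧ cc S.length = y ∧
    ∀ j : Fin S.length, cc j.1 = stepP (S.get j) a b (fun i => w j.1 i.1) ∧
      cc (j.1 + 1) = stepQ (S.get j) a b (fun i => w j.1 i.1)

theorem flatHolds_iff {C : Type v} [L.Structure C] (S : List (Step L n)) (a b : Fin n → C)
    (x y : C) : FlatHolds (L := L) S a b x y ↔ HoldsFrom (L := L) a b S x y := by
  induction S generalizing x with
  | nil =>
    constructor
    · rintro ⟨cc, w, h0, hl, -⟩
      exact h0.symm.trans hl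
    · rintro rfl
      exact ⟨fun _ => x, fun _ _ => x, rfl, rfl, fun j => j.elim0⟩
  | cons s S' ih =>
    constructor
    · rintro ⟨cc, w, h0, hl, hs⟩
      refine ⟨fun i => w 0 i.1, h0 ▸ (hs ⟨0, Nat.succ_pos _⟩).1, ?_⟩
      rw [← ih]
      refine ⟨fun m => cc (m + 1), fun m => w (m + 1), ?_, ?_, fun j => ⟨?_, ?_⟩⟩
      · exact (hs ⟨0, Nat.succ_pos _⟩).2
      · exact hl
      · exact (hs ⟨j.1 + 1, Nat.succ_lt_succ j.2⟩).1
      · exact (hs ⟨j.1 + 1, Nat.succ_lt_succ j.2⟩).2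
    · rintro ⟨w0, hx, htail⟩
      rw [← ih] at htail
      obtain ⟨cc', w', h0', hl', hs'⟩ := htail
      refine ⟨fun m => match m with | 0 => x | (m + 1) => cc' m,
        fun m => match m with
          | 0 => (fun iN => if h : iN < s.1 then w0 ⟨iN, h⟩ else x)
          | (m + 1) => w' m, rfl, hl', ?_⟩
      rintro ⟨jv, hjv⟩
      have hw0 : (fun i : Fin s.1 => if h : i.1 < s.1 then w0 ⟨i.1, h⟩ else x) = w0 :=
        funext fun i => dif_pos i.2
      cases jv with
      | zero =>
        exact ⟨hx.trans (congrArg (stepP s a b) hw0.symm),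
          h0'.trans (congrArg (stepQ s a b) hw0.symm)⟩
      | succ iv =>
        exact ⟨(hs' ⟨iv, Nat.lt_of_succ_lt_succ hjv⟩).1,
          (hs' ⟨iv, Nat.lt_of_succ_lt_succ hjv⟩).2⟩

variable (Z : ZeroOneData L)

/-- The bound-variable index type of the scheme formula. -/
def SchemeVars (S : List (Step L Z.n)) : Type :=
  Fin (S.length + 1) ⊕ ((j : Fin S.length) × Fin (S.get j).1)

instance (S : List (Step L Z.n)) : Fintype (SchemeVars Z S) := by
  unfold SchemeVars
  infer_instance

/-- Number of bound variables of the scheme formula. -/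
noncomputable def schemeN (S : List (Step L Z.n)) : ℕ := Fintype.card (SchemeVars Z S)

/-- Encoding of the bound variables. -/
noncomputable def schemeEnc (S : List (Step L Z.n)) : SchemeVars Z S ≃ Fin (schemeN Z S) :=
  Fintype.equivFin _

/-- Bound variable as a term. -/
noncomputable def bvT (S : List (Step L Z.n)) (z : SchemeVars Z S) :
    L.Term ((Fin Z.n ⊕ Fin 2) ⊕ Fin (schemeN Z S)) :=
  Term.var (Sum.inr (schemeEnc Z S z))

/-- Substitution realizing the "p"-side of step `j`. -/
noncomputable def sigmaP (S : List (Step L Z.n)) (j : Fin S.length) :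
    (Fin (S.get j).1 ⊕ (Fin Z.n ⊕ Fin Z.n)) →
      L.Term ((Fin Z.n ⊕ Fin 2) ⊕ Fin (schemeN Z S)) :=
  Sum.elim (fun i => bvT Z S (Sum.inr ⟨j, i⟩))
    (Sum.elim (fun s => (Z.zero s).relabel (fun x => x.elim))
      (fun s => Term.var (Sum.inl (Sum.inl s))))

/-- Substitution realizing the "q"-side of step `j`. -/
noncomputable def sigmaQ (S : List (Step L Z.n)) (j : Fin S.length) :
    (Fin (S.get j).1 ⊕ (Fin Z.n ⊕ Fin Z.n)) →
      L.Term ((Fin Z.n ⊕ Fin 2) ⊕ Fin (schemeN Z S)) :=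
  Sum.elim (fun i => bvT Z S (Sum.inr ⟨j, i⟩))
    (Sum.elim (fun s => Term.var (Sum.inl (Sum.inl s)))
      (fun s => (Z.zero s).relabel (fun x => x.elim)))

/-- The two equations of step `j`. -/
noncomputable def stepFm (S : List (Step L Z.n)) (j : Fin S.length) :
    L.BoundedFormula (Fin Z.n ⊕ Fin 2) (schemeN Z S) :=
  (Term.bdEqual (bvT Z S (Sum.inl j.castSucc)) ((S.get j).2.subst (sigmaP Z S j))) ⊓
    (Term.bdEqual (bvT Z S (Sum.inl j.succ)) ((S.get j).2.subst (sigmaQ Z S j)))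

/-- The quantifier-free matrix of the scheme formula. -/
noncomputable def schemeFm (S : List (Step L Z.n)) :
    L.BoundedFormula (Fin Z.n ⊕ Fin 2) (schemeN Z S) :=
  (Term.bdEqual (Term.var (Sum.inl (Sum.inr 0))) (bvT Z S (Sum.inl 0))) ⊓
    ((Term.bdEqual (Term.var (Sum.inl (Sum.inr 1))) (bvT Z S (Sum.inl (Fin.last S.length)))) ⊓
      (List.ofFn (stepFm Z S)).foldr (· ⊓ ·) ⊤)

theorem isQF_foldr {α : Type*} {l : ℕ} (fs : List (L.BoundedFormula α l))
    (h : ∀ φ ∈ fs, φ.IsQF) : (fs.foldr (· ⊓ ·) ⊤).IsQF := by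
  induction fs with
  | nil => exact BoundedFormula.IsQF.top
  | cons f fs ih =>
    exact (h f List.mem_cons_self).inf (ih fun φ hφ => h φ (List.mem_cons_of_mem _ hφ))

theorem schemeFm_isQF (S : List (Step L Z.n)) : (schemeFm Z S).IsQF := by
  refine (BoundedFormula.IsAtomic.equal _ _).isQF.inf
    ((BoundedFormula.IsAtomic.equal _ _).isQF.inf (isQF_foldr _ ?_))
  intro φ hφ
  rw [List.mem_ofFn] at hφ
  obtain ⟨j, rfl⟩ := hφ
  exact (BoundedFormula.IsAtomic.equal _ _).isQF.inf (BoundedFormula.IsAtomic.equal _ _).isQF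

variable {C : Type w} [L.Structure C]

theorem subst_realize_side (S : List (Step L Z.n)) (j : Fin S.length)
    (v : (Fin Z.n ⊕ Fin 2) → C) (xs : Fin (schemeN Z S) → C) :
    ((S.get j).2.subst (sigmaP Z S j)).realize (Sum.elim v xs) =
        stepP (S.get j) (Z.zeroA C) (v ∘ Sum.inl) (fun i => xs (schemeEnc Z S (Sum.inr ⟨j, i⟩))) ∧
      ((S.get j).2.subst (sigmaQ Z S j)).realize (Sum.elim v xs) =
        stepQ (S.get j) (Z.zeroA C) (v ∘ Sum.inl) (fun i => xs (schemeEnc Z S (Sum.inr ⟨j, i⟩))) := by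
  constructor <;>
  · rw [Term.realize_subst]
    refine congrArg (fun u => Term.realize u (S.get j).2) (funext fun z => ?_)
    rcases z with i | (s | s)
    · rfl
    · first
      | (show ((Z.zero s).relabel (fun x => x.elim)).realize (Sum.elim v xs) = Z.zeroA C s
         rw [Term.realize_relabel]
         exact congrArg (fun u => Term.realize u (Z.zero s)) (funext fun x => x.elim))
      | rfl
    · first
      | (show ((Z.zero s).relabel (fun x => x.elim)).realize (Sum.elim v xs) = Z.zeroA C s
         rw [Term.realize_relabel]
         exact congrArg (fun u => Term.realize u (Z.zero s)) (funext fun x => x.elim))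
      | rfl

theorem realize_schemeFm (S : List (Step L Z.n)) (v : (Fin Z.n ⊕ Fin 2) → C)
    (xs : Fin (schemeN Z S) → C) :
    (schemeFm Z S).Realize v xs ↔
      (v (Sum.inr 0) = xs (schemeEnc Z S (Sum.inl 0)) ∧
       v (Sum.inr 1) = xs (schemeEnc Z S (Sum.inl (Fin.last S.length))) ∧
       ∀ j : Fin S.length,
         xs (schemeEnc Z S (Sum.inl j.castSucc)) =
           stepP (S.get j) (Z.zeroA C) (v ∘ Sum.inl)
             (fun i => xs (schemeEnc Z S (Sum.inr ⟨j, i⟩))) ∧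
         xs (schemeEnc Z S (Sum.inl j.succ)) =
           stepQ (S.get j) (Z.zeroA C) (v ∘ Sum.inl)
             (fun i => xs (schemeEnc Z S (Sum.inr ⟨j, i⟩)))) := by
  unfold schemeFm
  rw [BoundedFormula.realize_inf, BoundedFormula.realize_inf,
    BoundedFormula.realize_foldr_inf]
  simp only [BoundedFormula.realize_bdEqual]
  refine and_congr Iff.rfl (and_congr Iff.rfl ?_)
  constructor
  · intro h j
    have := h (stepFm Z S j) (by rw [List.mem_ofFn]; exact ⟨j, rfl⟩)
    rw [stepFm, BoundedFormula.realize_inf, BoundedFormula.realize_bdEqual,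
      BoundedFormula.realize_bdEqual, (subst_realize_side Z S j v xs).1,
      (subst_realize_side Z S j v xs).2] at this
    exact this
  · intro h φ hφ
    rw [List.mem_ofFn] at hφ
    obtain ⟨j, rfl⟩ := hφ
    rw [stepFm, BoundedFormula.realize_inf, BoundedFormula.realize_bdEqual,
      BoundedFormula.realize_bdEqual, (subst_realize_side Z S j v xs).1,
      (subst_realize_side Z S j v xs).2]
    exact h j

theorem realize_schemeFm_exs (S : List (Step L Z.n)) (v : (Fin Z.n ⊕ Fin 2) → C) :
    ((schemeFm Z S).exs.Realize v) ↔
      FlatHolds (L := L) S (Z.zeroA C) (v ∘ Sum.inl) (v (Sum.inr 0)) (v (Sum.inr 1)) := by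
  rw [BoundedFormula.realize_exs]
  constructor
  · rintro ⟨xs, h⟩
    rw [realize_schemeFm] at h
    refine ⟨fun m => if hm : m < S.length + 1 then xs (schemeEnc Z S (Sum.inl ⟨m, hm⟩))
        else v (Sum.inr 0),
      fun jN iN => if hj : jN < S.length then
        (if hi : iN < (S.get ⟨jN, hj⟩).1 then
          xs (schemeEnc Z S (Sum.inr ⟨⟨jN, hj⟩, ⟨iN, hi⟩⟩)) else v (Sum.inr 0))
        else v (Sum.inr 0), ?_, ?_, ?_⟩
    · exact (dif_pos (Nat.succ_pos _)).trans
        ((congrArg (fun z => xs (schemeEnc Z S (Sum.inl z)))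
          (Fin.ext (by simp))).trans h.1.symm)
    · exact (dif_pos (Nat.lt_succ_self _)).trans
        ((congrArg (fun z => xs (schemeEnc Z S (Sum.inl z)))
          (Fin.ext (by simp [Fin.last]))).trans h.2.1.symm)
    · intro j
      have hwj : (fun i : Fin (S.get j).1 =>
          if hj : j.1 < S.length then
            (if hi : i.1 < (S.get ⟨j.1, hj⟩).1 then
              xs (schemeEnc Z S (Sum.inr ⟨⟨j.1, hj⟩, ⟨i.1, hi⟩⟩)) else v (Sum.inr 0))
            else v (Sum.inr 0)) = fun i => xs (schemeEnc Z S (Sum.inr ⟨j, i⟩)) := by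
        funext i
        exact (dif_pos j.2).trans (dif_pos i.2)
      constructor
      · exact (dif_pos (Nat.lt_succ_of_lt j.2)).trans
          (((congrArg (fun z => xs (schemeEnc Z S (Sum.inl z))) (Fin.ext (by simp))).trans
            ((h.2.2 j).1)).trans
              (congrArg (stepP (S.get j) (Z.zeroA C) (v ∘ Sum.inl)) hwj.symm))
      · exact (dif_pos (Nat.succ_lt_succ j.2)).trans
          (((congrArg (fun z => xs (schemeEnc Z S (Sum.inl z))) (Fin.ext (by simp))).trans
            ((h.2.2 j).2)).trans
              (congrArg (stepQ (S.get j) (Z.zeroA C) (v ∘ Sum.inl)) hwj.symm))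
  · rintro ⟨cc, w, h0, hl, hs⟩
    refine ⟨(Sum.elim (fun p : Fin (S.length + 1) => cc p.1)
      (fun q : (j : Fin S.length) × Fin (S.get j).1 => w q.1.1 q.2.1)) ∘
        ⇑(schemeEnc Z S).symm, ?_⟩
    rw [realize_schemeFm]
    have hx : ∀ z : SchemeVars Z S,
        ((Sum.elim (fun p : Fin (S.length + 1) => cc p.1)
          (fun q : (j : Fin S.length) × Fin (S.get j).1 => w q.1.1 q.2.1)) ∘
            ⇑(schemeEnc Z S).symm) (schemeEnc Z S z) =
          Sum.elim (fun p : Fin (S.length + 1) => cc p.1)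
            (fun q : (j : Fin S.length) × Fin (S.get j).1 => w q.1.1 q.2.1) z := by
      intro z
      show Sum.elim _ _ ((schemeEnc Z S).symm (schemeEnc Z S z)) = _
      rw [Equiv.symm_apply_apply]
    refine ⟨?_, ?_, fun j => ⟨?_, ?_⟩⟩
    · rw [hx (Sum.inl 0)]
      show v (Sum.inr 0) = cc ((0 : Fin (S.length + 1)).val)
      rw [Fin.val_zero]
      exact h0.symm
    · rw [hx (Sum.inl (Fin.last S.length))]
      exact hl.symm
    · rw [hx (Sum.inl j.castSucc)]
      exact ((hs j).1).trans (congrArg _ (funext fun i => (hx (Sum.inr ⟨j, i⟩)).symm))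
    · rw [hx (Sum.inl j.succ)]
      exact ((hs j).2).trans (congrArg _ (funext fun i => (hx (Sum.inr ⟨j, i⟩)).symm))

end Aux19Formula

section Aux19QFTransfer

variable [L.IsAlgebraic] {C D : Type v} [L.Structure C] [L.Structure D]

theorem realize_qf_hom (h : C →[L] D) (hinj : Function.Injective h)
    {α : Type*} {l : ℕ} {ψ : L.BoundedFormula α l} (hq : ψ.IsQF)
    (v : α → C) (xs : Fin l → C) :
    ψ.Realize (⇑h ∘ v) (⇑h ∘ xs) ↔ ψ.Realize v xs := by
  induction hq with
  | falsum => exact Iff.rfl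
  | of_isAtomic ha =>
    cases ha with
    | equal t₁ t₂ =>
      rw [BoundedFormula.realize_bdEqual, BoundedFormula.realize_bdEqual]
      have hcomp : Sum.elim (⇑h ∘ v) (⇑h ∘ xs) = ⇑h ∘ Sum.elim v xs :=
        funext fun z => by rcases z with z | z <;> rfl
      rw [hcomp, HomClass.realize_term, HomClass.realize_term]
      exact hinj.eq_iff
    | rel R ts => exact isEmptyElim R
  | imp h1 h2 ih1 ih2 => rw [BoundedFormula.realize_imp, BoundedFormula.realize_imp, ih1, ih2]

theorem realize_exs_hom (h : C →[L] D) (hinj : Function.Injective h)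
    {α : Type*} {l : ℕ} {ψ : L.BoundedFormula α l} (hq : ψ.IsQF) (v : α → C)
    (hr : ψ.exs.Realize v) : ψ.exs.Realize (⇑h ∘ v) := by
  rw [BoundedFormula.realize_exs] at hr ⊢
  obtain ⟨xs, hxs⟩ := hr
  exact ⟨⇑h ∘ xs, (realize_qf_hom h hinj hq v xs).2 hxs⟩

end Aux19QFTransfer

end Paper



open Paper


/-- A variety with 0⃗ and 1⃗ having BFC has LexDFC iff for every
`A ∈ V` and every central element `e⃗`, the factor congruence θ_{0,e} equals the
principal congruence θ^A(0⃗, e⃗). -/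
theorem statement19 (L : FirstOrder.Language.{0, 0}) [L.IsAlgebraic]
    [Finite (Σ n, L.Functions n)]
    (E : Set (Identity L)) (Z : ZeroOneData L)
    (hsep : ZeroOneData.Separates.{u} Z E) (hbfc : HasBFC.{u} E) :
    HasLexDFC.{u} E Z ↔
      ∀ (A : Type u) [L.Structure A], InVariety E A →
        ∀ e : Fin Z.n → A, IsCentral E Z A e →
          ∀ θ δ : AlgCon L A, PairFor Z A e θ δ → θ = thetaPairs (L := L) (Z.zeroA A) e := by
  constructor
  · -- (⇒) LexDFC implies factor congruences are the principal ones
    rintro ⟨-, φ, ⟨mEx, ψ, hQF, rfl⟩, works⟩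
    intro A _ hA e hcent θ δ hPair
    obtain ⟨W⟩ := hcent
    letI := W.s₁
    letI := W.s₂
    set τ := W.iso with hτ
    set θ' := (fstCon (L := L) W.A₁ W.A₂).pull τ.toHom with hθ'def
    set δ' := (sndCon (L := L) W.A₁ W.A₂).pull τ.toHom with hδ'def
    have hτ0 : ∀ i, τ (Z.zeroA A i) = (Z.zeroA W.A₁ i, Z.zeroA W.A₂ i) := by
      intro i
      have h1 : τ.toHom (Z.zeroA A i) = Z.zeroA (W.A₁ × W.A₂) i := zeroA_hom Z τ.toHom i
      rw [zeroA_prod] at h1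
      exact h1
    have hτ1 : ∀ i, τ (Z.oneA A i) = (Z.oneA W.A₁ i, Z.oneA W.A₂ i) := by
      intro i
      have h1 : τ.toHom (Z.oneA A i) = Z.oneA (W.A₁ × W.A₂) i := oneA_hom Z τ.toHom i
      rw [oneA_prod] at h1
      exact h1
    have hPair' : PairFor Z A e θ' δ' := by
      refine ⟨⟨?_, ?_⟩, ?_, ?_⟩
      · apply AlgCon.ext'
        intro x y
        show ((τ x).1 = (τ y).1 ∧ (τ x).2 = (τ y).2) ↔ x = y
        constructor
        · intro h
          exact τ.injective (Prod.ext_iff.2 h)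
        · rintro rfl
          exact ⟨rfl, rfl⟩
      · intro x y
        refine ⟨τ.symm ((τ x).1, (τ y).2), ?_, ?_⟩
        · show (τ x).1 = (τ (τ.symm ((τ x).1, (τ y).2))).1
          rw [Language.Equiv.apply_symm_apply]
        · show (τ (τ.symm ((τ x).1, (τ y).2))).2 = (τ y).2
          rw [Language.Equiv.apply_symm_apply]
      · intro i
        show (τ (e i)).1 = (τ (Z.zeroA A i)).1
        rw [W.he i, hτ0 i]
      · intro i
        show (τ (e i)).2 = (τ (Z.oneA A i)).2
        rw [W.he i, hτ1 i]
    have hθeq : θ = θ' := pairFor_unique hsep hbfc hA hPair hPair'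
    rw [hθeq]
    set P := (W.A₁ × W.A₂) with hPdef
    set ehP := hatE Z W.A₁ W.A₂ with hehP
    set γ := thetaPairs (L := L) (Z.zeroA P) ehP with hγdef
    have hγgen : ∀ i, γ.r (Z.zeroA P i) (ehP i) := fun i => AlgCon.conGen_of ⟨i, rfl, rfl⟩
    have hγfst : ∀ {x y : P}, γ.r x y → x.1 = y.1 := by
      intro x y h
      refine AlgCon.conGen_min (c := fstCon (L := L) W.A₁ W.A₂) ?_ h
      rintro p q ⟨i, rfl, rfl⟩
      show (Z.zeroA P i).1 = (ehP i).1
      rw [zeroA_prod]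
      rfl
    apply AlgCon.ext'
    intro a b
    constructor
    · -- hard inclusion
      intro hab
      have hab' : (τ a).1 = (τ b).1 := hab
      set Q := ConQuot γ with hQdef
      have hQv : InVariety E Q := (W.mem₁.prod W.mem₂).quot γ
      set hq : P →[L] (Q × W.A₂) := pairHom (conQuotMk γ) sndHom with hhq
      have hinj : Function.Injective hq := by
        intro x y hxy
        have h1 : ConQuot.mk γ x = ConQuot.mk γ y :=
          congrArg (fun z : (ConQuot γ) × W.A₂ => z.1) hxy
        have h2 : x.2 = y.2 := congrArg (fun z : (ConQuot γ) × W.A₂ => z.2) hxy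
        exact Prod.ext_iff.2 ⟨hγfst ((ConQuot.mk_eq_iff γ).1 h1), h2⟩
      have hr1 : ψ.exs.Realize (M := P)
          (Sum.elim (fun i => (Z.zeroA W.A₁ i, Z.oneA W.A₂ i)) ![τ a, τ b]) := by
        have := (works W.A₁ W.A₂ W.mem₁ W.mem₂ (τ a).1 (τ b).1 (τ a).2 (τ b).2).2 hab'
        exact this
      have hr2 := realize_exs_hom hq hinj hQF _ hr1
      have hcomp : ⇑hq ∘ (Sum.elim (fun i => (Z.zeroA W.A₁ i, Z.oneA W.A₂ i)) ![τ a, τ b]) =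
          Sum.elim (fun i => (Z.zeroA Q i, Z.oneA W.A₂ i))
            ![(ConQuot.mk γ (τ a), (τ a).2), (ConQuot.mk γ (τ b), (τ b).2)] := by
        funext z
        rcases z with i | j
        · show (ConQuot.mk γ (ehP i), (ehP i).2) = (Z.zeroA Q i, Z.oneA W.A₂ i)
          refine Prod.ext_iff.2 ⟨?_, rfl⟩
          rw [zeroA_quot]
          exact (ConQuot.mk_eq_iff γ).2 (γ.symm (hγgen i))
        · fin_cases j <;> rfl
      rw [hcomp] at hr2
      have hmkeq : ConQuot.mk γ (τ a) = ConQuot.mk γ (τ b) :=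
        (works Q W.A₂ hQv W.mem₂ (ConQuot.mk γ (τ a)) (ConQuot.mk γ (τ b))
          (τ a).2 (τ b).2).1 hr2
      have hγab : γ.r (τ a) (τ b) := (ConQuot.mk_eq_iff γ).1 hmkeq
      -- transport along τ.symm
      have hD : ∀ {x y : P}, γ.r x y →
          (thetaPairs (L := L) (Z.zeroA A) e).r (τ.symm x) (τ.symm y) := by
        intro x y h
        refine AlgCon.conGen_min
          (c := (thetaPairs (L := L) (Z.zeroA A) e).pull τ.symm.toHom) ?_ h
        rintro p q ⟨i, rfl, rfl⟩
        show (thetaPairs (L := L) (Z.zeroA A) e).r (τ.symm (Z.zeroA P i)) (τ.symm (ehP i))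
        have hz : τ.symm (Z.zeroA P i) = Z.zeroA A i := zeroA_hom Z τ.symm.toHom i
        have he' : τ.symm (ehP i) = e i := by
          rw [show ehP i = τ (e i) from (W.he i).symm, Language.Equiv.symm_apply_apply]
        rw [hz, he']
        exact AlgCon.conGen_of ⟨i, rfl, rfl⟩
      have := hD hγab
      rwa [Language.Equiv.symm_apply_apply, Language.Equiv.symm_apply_apply] at this
    · -- easy inclusion
      intro hab
      refine AlgCon.conGen_min (c := θ') ?_ hab
      rintro p q ⟨i, rfl, rfl⟩
      exact θ'.symm (hPair'.2.1 i)
  · -- (⇐) principal factor congruences give an existential formula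
    intro hRHS
    refine ⟨hbfc, ?_⟩
    set F₁ := FreeAlg E PUnit.{u + 1} with hF₁def
    set F₂ := FreeAlg E (ULift.{u} Bool) with hF₂def
    have hF₁ : InVariety E F₁ := freeAlg_inVariety E _
    have hF₂ : InVariety E F₂ := freeAlg_inVariety E _
    set P₀ := F₁ × F₂ with hP₀def
    have hP₀ : InVariety E P₀ := hF₁.prod hF₂
    set u₀ : F₁ := freeGen E PUnit.unit with hu₀
    set c₀ : F₂ := freeGen E (ULift.up true) with hc₀
    set d₀ : F₂ := freeGen E (ULift.up false) with hd₀
    set eh0 := hatE Z F₁ F₂ with heh0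
    have hkey : fstCon (L := L) F₁ F₂ = thetaPairs (L := L) (Z.zeroA P₀) eh0 :=
      hRHS P₀ hP₀ eh0 (isCentral_hat Z hF₁ hF₂) _ _ (pairFor_hat Z F₁ F₂)
    have hmem : (thetaPairs (L := L) (Z.zeroA P₀) eh0).r (u₀, c₀) (u₀, d₀) := by
      have hfst : (fstCon (L := L) F₁ F₂).r (u₀, c₀) (u₀, d₀) := rfl
      rw [hkey] at hfst
      exact hfst
    obtain ⟨S, hS⟩ := chain_to_holdsFrom ((thetaPairs_iff_chain _ _ _ _).1 hmem)
    refine ⟨(schemeFm Z S).exs, ⟨schemeN Z S, schemeFm Z S, schemeFm_isQF Z S, rfl⟩, ?_⟩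
    intro A B _ _ hA hB a b c d
    rw [realize_schemeFm_exs, flatHolds_iff]
    constructor
    · intro hreal
      have hchain := holdsFrom_to_chain hreal
      have hth : (thetaPairs (L := L) (Z.zeroA (A × B)) (hatE Z A B)).r (a, c) (b, d) :=
        (thetaPairs_iff_chain _ _ _ _).2 hchain
      have hkey2 : fstCon (L := L) A B = thetaPairs (L := L) (Z.zeroA (A × B)) (hatE Z A B) :=
        hRHS (A × B) (hA.prod hB) _ (isCentral_hat Z hA hB) _ _ (pairFor_hat Z A B)
      rw [← hkey2] at hth
      exact hth
    · intro hab
      set h₁ := freeHom hA (fun _ : PUnit.{u + 1} => a) with hh₁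
      set h₂ := freeHom hB (fun i : ULift.{u} Bool => if i.down then c else d) with hh₂
      set hh := prodMapHom h₁ h₂ with hhh
      have hmain := holdsFrom_hom hh hS
      have hz : ⇑hh ∘ (Z.zeroA P₀) = Z.zeroA (A × B) := funext fun i => zeroA_hom Z hh i
      have heh : ⇑hh ∘ eh0 = fun i => (Z.zeroA A i, Z.oneA B i) := by
        funext i
        show (h₁ (Z.zeroA F₁ i), h₂ (Z.oneA F₂ i)) = _
        rw [zeroA_hom, oneA_hom]
      have hu : hh (u₀, c₀) = (a, c) := by
        show (h₁ u₀, h₂ c₀) = (a, c)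
        rw [hu₀, hc₀, freeHom_gen, freeHom_gen]
        rfl
      have hud : hh (u₀, d₀) = (b, d) := by
        show (h₁ u₀, h₂ d₀) = (b, d)
        rw [hu₀, hd₀, freeHom_gen, freeHom_gen]
        rw [hab]
        rfl
      rw [hz, heh, hu, hud] at hmain
      exact hmain
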